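/- Let f be a countably Markov and mixing interval map with transition matrix M. Then ([0,1], f) and the Markov shift (Σ_M, σ) are isomorphic modulo countable invariant sets: there are totally invariant countable sets D ⊂ [0,1] (the pre-partition points) and N ⊂ Σ_M (the false itineraries), and a bimeasurable bijection ψ : Σ_M∖N → [0,1]∖D with f∘ψ = ψ∘σ. -/

import Mathlib

/-- A countably Markov structure for an interval map `f` on `[0,1]`: a countable partition of
`[0,1]` into open intervals `(a i, b i)` and a countable set `C` of partition points, such
that `f` maps `[0,1]` into itself, is continuous and strictly monotone on each partition
interval, the image of a partition interval either contains or is disjoint from each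
partition interval, and the partition points are forward invariant. -/
structure CountMarkov (f : ℝ → ℝ) where
  ι : Type
  countable : Countable ι
  a : ι → ℝ
  b : ι → ℝ
  lt : ∀ i, a i < b i
  sub : ∀ i, Set.Ioo (a i) (b i) ⊆ Set.Icc 0 1
  C : Set ℝ
  C_cnt : C.Countable
  C_sub : C ⊆ Set.Icc 0 1
  cover : Set.Icc 0 1 ⊆ (⋃ i, Set.Ioo (a i) (b i)) ∪ C
  disj : Pairwise fun i j => Disjoint (Set.Ioo (a i) (b i)) (Set.Ioo (a j) (b j))
  disjC : ∀ i, Disjoint (Set.Ioo (a i) (b i)) C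
  mapsTo : Set.MapsTo f (Set.Icc 0 1) (Set.Icc 0 1)
  cont : ∀ i, ContinuousOn f (Set.Ioo (a i) (b i))
  mono : ∀ i, StrictMonoOn f (Set.Ioo (a i) (b i)) ∨ StrictAntiOn f (Set.Ioo (a i) (b i))
  markov : ∀ i j, Set.Ioo (a j) (b j) ⊆ f '' Set.Ioo (a i) (b i) ∨
    f '' Set.Ioo (a i) (b i) ∩ Set.Ioo (a j) (b j) = ∅
  fwdC : f '' C ⊆ C

/-- Topological mixing of `f` relative to `[0,1]`: any nonempty relatively open subset of
`[0,1]` eventually meets any other under iteration. -/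
def MixingOn (f : ℝ → ℝ) : Prop :=
  ∀ U V : Set ℝ, IsOpen U → IsOpen V →
    (U ∩ Set.Icc 0 1).Nonempty → (V ∩ Set.Icc 0 1).Nonempty →
    ∃ N : ℕ, ∀ n ≥ N, (f^[n] '' (U ∩ Set.Icc 0 1) ∩ (V ∩ Set.Icc 0 1)).Nonempty

/-- Admissible itineraries: the symbolic space `Σ_M` of the Markov shift associated with the
Markov partition (`m i j = 1` iff `f(i) ⊇ j`). -/
def Adm (f : ℝ → ℝ) (mp : CountMarkov f) (w : ℕ → mp.ι) : Prop :=
  ∀ k : ℕ, Set.Ioo (mp.a (w (k + 1))) (mp.b (w (k + 1))) ⊆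
    f '' Set.Ioo (mp.a (w k)) (mp.b (w k))

/-- The shift map on `Σ_M`. -/
def mShift (f : ℝ → ℝ) (mp : CountMarkov f) :
    {w : ℕ → mp.ι // Adm f mp w} → {w : ℕ → mp.ι // Adm f mp w} :=
  fun ω => ⟨fun k => ω.1 (k + 1), fun k => ω.2 (k + 1)⟩

/-- Borel structure on the shift space (discrete structure on the countable alphabet). -/
instance (f : ℝ → ℝ) (mp : CountMarkov f) : MeasurableSpace {w : ℕ → mp.ι // Adm f mp w} :=
  @Subtype.instMeasurableSpace _ _ (@MeasurableSpace.pi _ _ (fun _ => ⊤))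

namespace MProof
open Set

variable {f : ℝ → ℝ} (mp : CountMarkov f)

/-- partition interval -/
def J (i : mp.ι) : Set ℝ := Set.Ioo (mp.a i) (mp.b i)

lemma J_nonempty (i : mp.ι) : (J mp i).Nonempty := nonempty_Ioo.2 (mp.lt i)

lemma uncountable_Ioo {u v : ℝ} (h : u < v) : ¬ (Set.Ioo u v).Countable := by
  intro hc
  have h1 := Cardinal.le_aleph0_iff_set_countable.2 hc
  rw [Cardinal.mk_Ioo_real h] at h1
  exact absurd h1 (not_le.2 Cardinal.aleph0_lt_continuum)

lemma notCountable_I : ¬ (Set.Icc (0:ℝ) 1).Countable := by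
  intro h
  exact uncountable_Ioo (by norm_num : (0:ℝ) < 1) (h.mono Set.Ioo_subset_Icc_self)

lemma nonempty_iota : Nonempty mp.ι := by
  by_contra h
  have : Set.Icc (0:ℝ) 1 ⊆ mp.C := by
    intro x hx
    rcases mp.cover hx with hx' | hx'
    · simp only [Set.mem_iUnion] at hx'
      exact absurd (Nonempty.intro hx'.choose) h
    · exact hx'
  exact notCountable_I (mp.C_cnt.mono this)

lemma injOn_J (i : mp.ι) : Set.InjOn f (J mp i) := by
  rcases mp.mono i with h | h
  · exact h.injOn
  · exact h.injOn

lemma J_eq_of_mem {i j : mp.ι} {x : ℝ} (hi : x ∈ J mp i) (hj : x ∈ J mp j) : i = j := by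
  by_contra h
  exact (mp.disj h).ne_of_mem hi hj rfl

lemma closure_J (i : mp.ι) : closure (J mp i) = Set.Icc (mp.a i) (mp.b i) :=
  closure_Ioo (mp.lt i).ne

lemma not_endpoint_mem_J (i j : mp.ι) : mp.a i ∉ J mp j ∧ mp.b i ∉ J mp j := by
  constructor
  · intro hj
    have hab : mp.a i < min (mp.b i) (mp.b j) := lt_min (mp.lt i) hj.2
    set y := (mp.a i + min (mp.b i) (mp.b j)) / 2 with hy
    have h1 : mp.a i < y := by rw [hy]; linarith
    have h2 : y < min (mp.b i) (mp.b j) := by rw [hy]; linarith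
    have hyi : y ∈ J mp i := ⟨h1, lt_of_lt_of_le h2 (min_le_left _ _)⟩
    have hyj : y ∈ J mp j := ⟨lt_trans hj.1 h1, lt_of_lt_of_le h2 (min_le_right _ _)⟩
    have := J_eq_of_mem mp hyi hyj
    subst this
    exact lt_irrefl _ hj.1
  · intro hj
    have hab : max (mp.a i) (mp.a j) < mp.b i := max_lt (mp.lt i) hj.1
    set y := (max (mp.a i) (mp.a j) + mp.b i) / 2 with hy
    have h1 : max (mp.a i) (mp.a j) < y := by rw [hy]; linarith
    have h2 : y < mp.b i := by rw [hy]; linarith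
    have hyi : y ∈ J mp i := ⟨lt_of_le_of_lt (le_max_left _ _) h1, h2⟩
    have hyj : y ∈ J mp j := ⟨lt_of_le_of_lt (le_max_right _ _) h1, lt_trans h2 hj.2⟩
    have := J_eq_of_mem mp hyi hyj
    subst this
    exact lt_irrefl _ hj.2

lemma Icc_endpoints_sub (i : mp.ι) : Set.Icc (mp.a i) (mp.b i) ⊆ Set.Icc 0 1 := by
  rw [← closure_J]
  have := closure_mono (mp.sub i)
  rwa [closure_Icc] at this

lemma endpoints_mem_C (i : mp.ι) : mp.a i ∈ mp.C ∧ mp.b i ∈ mp.C := by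
  constructor
  · have ha : mp.a i ∈ Set.Icc (0:ℝ) 1 :=
      Icc_endpoints_sub mp i ⟨le_refl _, (mp.lt i).le⟩
    rcases mp.cover ha with h | h
    · exfalso
      simp only [Set.mem_iUnion] at h
      obtain ⟨j, hj⟩ := h
      exact (not_endpoint_mem_J mp i j).1 hj
    · exact h
  · have hb : mp.b i ∈ Set.Icc (0:ℝ) 1 :=
      Icc_endpoints_sub mp i ⟨(mp.lt i).le, le_refl _⟩
    rcases mp.cover hb with h | h
    · exfalso
      simp only [Set.mem_iUnion] at h
      obtain ⟨j, hj⟩ := h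
      exact (not_endpoint_mem_J mp i j).2 hj
    · exact h

/-- closure of a partition interval is inside the interval union C -/
lemma closure_J_sub (i : mp.ι) : closure (J mp i) ⊆ J mp i ∪ mp.C := by
  rw [closure_J]
  intro x hx
  rcases eq_or_lt_of_le hx.1 with h1 | h1
  · exact Or.inr (h1 ▸ (endpoints_mem_C mp i).1)
  rcases eq_or_lt_of_le hx.2 with h2 | h2
  · exact Or.inr (h2 ▸ (endpoints_mem_C mp i).2)
  exact Or.inl ⟨h1, h2⟩

def Dset (f : ℝ → ℝ) (mp : CountMarkov f) : Set ℝ :=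
  (⋃ n : ℕ, f^[n] ⁻¹' mp.C) ∩ Set.Icc 0 1

include mp in
lemma countable_pre {A : Set ℝ} (hA : A.Countable) :
    (f ⁻¹' A ∩ Set.Icc 0 1).Countable := by
  have hsub : f ⁻¹' A ∩ Set.Icc 0 1 ⊆
      (mp.C) ∪ ⋃ i, (J mp i ∩ f ⁻¹' A) := by
    intro x ⟨hxA, hxI⟩
    rcases mp.cover hxI with h | h
    · obtain ⟨i, hi⟩ := Set.mem_iUnion.1 h
      exact Or.inr (Set.mem_iUnion.2 ⟨i, hi, hxA⟩)
    · exact Or.inl h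
  refine Set.Countable.mono hsub (Set.Countable.union mp.C_cnt ?_)
  have := mp.countable
  refine Set.countable_iUnion fun i => ?_
  have hmt : Set.MapsTo f (J mp i ∩ f ⁻¹' A) A := fun x hx => hx.2
  exact hmt.countable_of_injOn ((injOn_J mp i).mono Set.inter_subset_left) hA

lemma Dn_countable (n : ℕ) : (f^[n] ⁻¹' mp.C ∩ Set.Icc 0 1).Countable := by
  induction n with
  | zero => exact mp.C_cnt.mono (by simp)
  | succ n ih =>
      have hsub : f^[n+1] ⁻¹' mp.C ∩ Set.Icc 0 1 ⊆
          f ⁻¹' (f^[n] ⁻¹' mp.C ∩ Set.Icc 0 1) ∩ Set.Icc 0 1 := by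
        intro x ⟨hx, hxI⟩
        refine ⟨⟨?_, mp.mapsTo hxI⟩, hxI⟩
        rw [Set.mem_preimage, Function.iterate_succ_apply] at hx
        exact hx
      exact (countable_pre mp ih).mono hsub

lemma Dset_countable : (Dset f mp).Countable := by
  rw [Dset, Set.iUnion_inter]
  exact Set.countable_iUnion fun n => Dn_countable mp n

lemma Dset_invariant : f ⁻¹' (Dset f mp) ∩ Set.Icc 0 1 = Dset f mp := by
  ext x
  constructor
  · rintro ⟨⟨hx, _⟩, hxI⟩
    simp only [Set.mem_iUnion] at hx
    obtain ⟨n, hn⟩ := hx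
    refine ⟨Set.mem_iUnion.2 ⟨n+1, ?_⟩, hxI⟩
    rwa [Set.mem_preimage, Function.iterate_succ_apply]
  · rintro ⟨hx, hxI⟩
    simp only [Set.mem_iUnion] at hx
    obtain ⟨n, hn⟩ := hx
    refine ⟨⟨?_, mp.mapsTo hxI⟩, hxI⟩
    simp only [Set.mem_iUnion]
    cases n with
    | zero => exact ⟨0, mp.fwdC ⟨x, hn, rfl⟩⟩
    | succ m =>
        refine ⟨m, ?_⟩
        rw [Set.mem_preimage] at hn ⊢
        rwa [Function.iterate_succ_apply] at hn

/-- the good set -/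
def G (f : ℝ → ℝ) (mp : CountMarkov f) : Set ℝ := Set.Icc 0 1 \ Dset f mp

lemma C_sub_Dset : mp.C ⊆ Dset f mp := fun x hx =>
  ⟨Set.mem_iUnion.2 ⟨0, hx⟩, mp.C_sub hx⟩

lemma G_mapsTo : Set.MapsTo f (G f mp) (G f mp) := by
  rintro x ⟨hxI, hxD⟩
  refine ⟨mp.mapsTo hxI, fun hfx => hxD ?_⟩
  rw [← Dset_invariant mp]
  exact ⟨hfx, hxI⟩

lemma G_iterate {x : ℝ} (hx : x ∈ G f mp) (k : ℕ) : f^[k] x ∈ G f mp := by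
  induction k with
  | zero => exact hx
  | succ k ih => rw [Function.iterate_succ_apply']; exact G_mapsTo mp ih

lemma mem_J_of_G {x : ℝ} (hx : x ∈ G f mp) : ∃ i, x ∈ J mp i := by
  rcases mp.cover hx.1 with h | h
  · exact Set.mem_iUnion.1 h
  · exact absurd (C_sub_Dset mp h) hx.2

open Classical in
noncomputable def itin (x : ℝ) (k : ℕ) : mp.ι :=
  if h : ∃ i, f^[k] x ∈ J mp i then h.choose
  else Classical.choice (nonempty_iota mp)

lemma itin_spec {x : ℝ} (hx : x ∈ G f mp) (k : ℕ) : f^[k] x ∈ J mp (itin mp x k) := by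
  have h : ∃ i, f^[k] x ∈ J mp i := mem_J_of_G mp (G_iterate mp hx k)
  rw [itin, dif_pos h]
  exact h.choose_spec

lemma itin_eq {x : ℝ} {i : mp.ι} {k : ℕ} (hi : f^[k] x ∈ J mp i) : itin mp x k = i := by
  have h : ∃ j, f^[k] x ∈ J mp j := ⟨i, hi⟩
  rw [itin, dif_pos h]
  exact J_eq_of_mem mp h.choose_spec hi

lemma itin_adm {x : ℝ} (hx : x ∈ G f mp) :
    ∀ k : ℕ, J mp (itin mp x (k+1)) ⊆ f '' J mp (itin mp x k) := by
  intro k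
  rcases mp.markov (itin mp x k) (itin mp x (k+1)) with h | h
  · exact h
  · exfalso
    have h1 : f^[k+1] x ∈ f '' J mp (itin mp x k) := by
      rw [Function.iterate_succ_apply']
      exact Set.mem_image_of_mem f (itin_spec mp hx k)
    have h2 : f^[k+1] x ∈ J mp (itin mp x (k+1)) := itin_spec mp hx (k+1)
    exact Set.eq_empty_iff_forall_notMem.1 h (f^[k+1] x) ⟨h1, h2⟩

lemma itin_shift {x : ℝ} (hx : x ∈ G f mp) (k : ℕ) :
    itin mp (f x) k = itin mp x (k+1) := by
  apply itin_eq
  rw [← Function.iterate_succ_apply]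
  exact itin_spec mp hx (k+1)

lemma mono_uIoo {i : mp.ι} {x y z : ℝ} (hx : x ∈ J mp i) (hy : y ∈ J mp i)
    (hz : z ∈ Set.uIoo x y) : f z ∈ Set.uIoo (f x) (f y) := by
  have hzJ : z ∈ J mp i := by
    have hc : Set.OrdConnected (J mp i) := Set.ordConnected_Ioo
    exact hc.uIcc_subset hx hy (Set.uIoo_subset_uIcc_self hz)
  rcases le_total x y with hxy | hxy
  · rw [Set.uIoo_of_le hxy] at hz
    rcases mp.mono i with h | h
    · exact Set.mem_uIoo_of_lt (h hx hzJ hz.1) (h hzJ hy hz.2)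
    · exact Set.mem_uIoo_of_gt (h hzJ hy hz.2) (h hx hzJ hz.1)
  · rw [Set.uIoo_of_ge hxy] at hz
    rcases mp.mono i with h | h
    · exact Set.mem_uIoo_of_gt (h hy hzJ hz.1) (h hzJ hx hz.2)
    · exact Set.mem_uIoo_of_lt (h hzJ hx hz.2) (h hy hzJ hz.1)

lemma uIoo_sub_J {i : mp.ι} {x y : ℝ} (hx : x ∈ J mp i) (hy : y ∈ J mp i) :
    Set.uIoo x y ⊆ J mp i :=
  fun _ hz => Set.ordConnected_Ioo.uIcc_subset hx hy (Set.uIoo_subset_uIcc_self hz)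

/-- betweenness: the key monotonicity lemma. -/
lemma between_iterate {x y z : ℝ} {w : ℕ → mp.ι} {n : ℕ}
    (hx : ∀ m ≤ n, f^[m] x ∈ J mp (w m)) (hy : ∀ m ≤ n, f^[m] y ∈ J mp (w m))
    (hz : z ∈ Set.uIoo x y) : ∀ m ≤ n, f^[m] z ∈ Set.uIoo (f^[m] x) (f^[m] y) := by
  induction n with
  | zero =>
      intro m hm
      interval_cases m
      exact hz
  | succ n ih =>
      have hx' : ∀ m ≤ n, f^[m] x ∈ J mp (w m) := fun m hm => hx m (hm.trans (Nat.le_succ n))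
      have hy' : ∀ m ≤ n, f^[m] y ∈ J mp (w m) := fun m hm => hy m (hm.trans (Nat.le_succ n))
      intro m hm
      rcases Nat.lt_or_ge m (n+1) with h | h
      · exact ih hx' hy' m (Nat.lt_succ_iff.1 h)
      · have hm' : m = n + 1 := le_antisymm hm h
        subst hm'
        have hzn := ih hx' hy' n (le_refl n)
        rw [Function.iterate_succ_apply', Function.iterate_succ_apply',
          Function.iterate_succ_apply']
        exact mono_uIoo mp (hx n (Nat.le_succ n)) (hy n (Nat.le_succ n)) hzn

section Itinerary

variable {mp} {x y : ℝ} {w : ℕ → mp.ι}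

lemma key_mapsTo (hx : ∀ m, f^[m] x ∈ J mp (w m)) (hy : ∀ m, f^[m] y ∈ J mp (w m)) (n : ℕ) :
    Set.MapsTo f^[n] (Set.uIoo x y) (J mp (w n)) := fun z hz =>
  uIoo_sub_J mp (hx n) (hy n)
    (between_iterate mp (fun m _ => hx m) (fun m _ => hy m) hz n le_rfl)

lemma key_injOn (hx : ∀ m, f^[m] x ∈ J mp (w m)) (hy : ∀ m, f^[m] y ∈ J mp (w m)) (n : ℕ) :
    Set.InjOn f^[n] (Set.uIoo x y) := by
  induction n with
  | zero => exact fun a _ b _ h => h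
  | succ n ih =>
      rw [Function.iterate_succ']
      exact (injOn_J mp (w n)).comp ih (key_mapsTo hx hy n)

lemma key_contOn (hx : ∀ m, f^[m] x ∈ J mp (w m)) (hy : ∀ m, f^[m] y ∈ J mp (w m)) (n : ℕ) :
    ContinuousOn f^[n] (Set.uIoo x y) := by
  induction n with
  | zero => exact continuousOn_id
  | succ n ih =>
      rw [Function.iterate_succ']
      exact (mp.cont (w n)).comp ih (key_mapsTo hx hy n)

lemma itin_not_lt (hmix : MixingOn f) (hxG : x ∈ G f mp) (hyG : y ∈ G f mp)
    (hw : itin mp x = itin mp y) : ¬ x < y := by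
  intro hlt
  set w := itin mp x with hwdef
  have hx : ∀ m, f^[m] x ∈ J mp (w m) := fun m => itin_spec mp hxG m
  have hy : ∀ m, f^[m] y ∈ J mp (w m) := fun m => by
    rw [hw]; exact itin_spec mp hyG m
  have huIoo : Set.uIoo x y = Set.Ioo x y := Set.uIoo_of_le hlt.le
  set c := (x + y) / 2 with hc
  have hxc : x < c := by rw [hc]; linarith
  have hcy : c < y := by rw [hc]; linarith
  have hUsub : Set.Ioo x c ⊆ Set.uIoo x y := by
    rw [huIoo]; exact Set.Ioo_subset_Ioo le_rfl hcy.le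
  have hU'sub : Set.Ioo c y ⊆ Set.uIoo x y := by
    rw [huIoo]; exact Set.Ioo_subset_Ioo hxc.le le_rfl
  have hsubI : Set.uIoo x y ⊆ Set.Icc 0 1 := fun z hz =>
    mp.sub (w 0) (uIoo_sub_J mp (hx 0) (hy 0) hz)
  -- mixing applications
  have hne1 : (Set.Iio (1/2:ℝ) ∩ Set.Icc 0 1).Nonempty := ⟨0, by norm_num⟩
  have hne2 : (Set.Ioi (1/2:ℝ) ∩ Set.Icc 0 1).Nonempty := ⟨1, by norm_num⟩
  have hUne : (Set.Ioo x c ∩ Set.Icc 0 1).Nonempty := by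
    rw [Set.inter_eq_self_of_subset_left (hUsub.trans hsubI)]
    exact Set.nonempty_Ioo.2 hxc
  have hU'ne : (Set.Ioo c y ∩ Set.Icc 0 1).Nonempty := by
    rw [Set.inter_eq_self_of_subset_left (hU'sub.trans hsubI)]
    exact Set.nonempty_Ioo.2 hcy
  obtain ⟨N1, hN1⟩ := hmix (Set.Ioo x c) (Set.Iio (1/2)) isOpen_Ioo isOpen_Iio hUne hne1
  obtain ⟨N2, hN2⟩ := hmix (Set.Ioo x c) (Set.Ioi (1/2)) isOpen_Ioo isOpen_Ioi hUne hne2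
  obtain ⟨N3, hN3⟩ := hmix (Set.Ioo c y) (Set.Iio (1/2)) isOpen_Ioo isOpen_Iio hU'ne hne1
  obtain ⟨N4, hN4⟩ := hmix (Set.Ioo c y) (Set.Ioi (1/2)) isOpen_Ioo isOpen_Ioi hU'ne hne2
  set n := max (max N1 N2) (max N3 N4) with hn
  have half_mem : ∀ (u v : ℝ), u < v → Set.Ioo u v ⊆ Set.uIoo x y →
      (f^[n] '' (Set.Ioo u v ∩ Set.Icc 0 1) ∩ (Set.Iio (1/2) ∩ Set.Icc 0 1)).Nonempty →
      (f^[n] '' (Set.Ioo u v ∩ Set.Icc 0 1) ∩ (Set.Ioi (1/2) ∩ Set.Icc 0 1)).Nonempty →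
      (1/2:ℝ) ∈ f^[n] '' Set.Ioo u v := by
    intro u v huv hsub h1 h2
    rw [Set.inter_eq_self_of_subset_left (hsub.trans hsubI)] at h1 h2
    obtain ⟨p, hp, hp2⟩ := h1
    obtain ⟨q, hq, hq2⟩ := h2
    have hconn : IsPreconnected (f^[n] '' Set.Ioo u v) :=
      (isPreconnected_Ioo).image _ ((key_contOn hx hy n).mono hsub)
    have := hconn.Icc_subset hp hq
    exact this ⟨hp2.1.le, hq2.1.le⟩
  have m1 := half_mem x c hxc hUsub
    (hN1 n (le_trans (le_max_left _ _) (le_max_left _ _)))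
    (hN2 n (le_trans (le_max_right _ _) (le_max_left _ _)))
  have m2 := half_mem c y hcy hU'sub
    (hN3 n (le_trans (le_max_left _ _) (le_max_right _ _)))
    (hN4 n (le_trans (le_max_right _ _) (le_max_right _ _)))
  obtain ⟨u1, hu1, hu1e⟩ := m1
  obtain ⟨u2, hu2, hu2e⟩ := m2
  have : u1 = u2 := key_injOn hx hy n (hUsub hu1) (hU'sub hu2) (hu1e.trans hu2e.symm)
  rw [this] at hu1
  exact lt_irrefl c (lt_trans hu2.1 hu1.2)

lemma itin_injOn (hmix : MixingOn f) : Set.InjOn (itin mp) (G f mp) := by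
  intro x hx y hy h
  rcases lt_trichotomy x y with hlt | he | hlt
  · exact absurd hlt (itin_not_lt hmix hx hy h)
  · exact he
  · exact absurd hlt (itin_not_lt hmix hy hx h.symm).elim
end Itinerary

/-- cylinder set -/
def cyl (w : ℕ → mp.ι) (n : ℕ) : Set ℝ := {x | ∀ m ≤ n, f^[m] x ∈ J mp (w m)}

lemma cyl_anti (w : ℕ → mp.ι) {n n' : ℕ} (h : n ≤ n') : cyl mp w n' ⊆ cyl mp w n :=
  fun _ hx m hm => hx m (hm.trans h)

lemma cyl_sub_J (w : ℕ → mp.ι) (n : ℕ) : cyl mp w n ⊆ J mp (w 0) :=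
  fun _ hx => hx 0 (Nat.zero_le n)

lemma cyl_sub_I (w : ℕ → mp.ι) (n : ℕ) : cyl mp w n ⊆ Set.Icc 0 1 :=
  (cyl_sub_J mp w n).trans (mp.sub (w 0))

lemma cyl_ordConnected (w : ℕ → mp.ι) (n : ℕ) : Set.OrdConnected (cyl mp w n) := by
  constructor
  intro x hx y hy z hz
  rcases eq_or_lt_of_le hz.1 with h1 | h1
  · rwa [← h1]
  rcases eq_or_lt_of_le hz.2 with h2 | h2
  · rwa [h2]
  have hzu : (z:ℝ) ∈ Set.uIoo x y := by
    rcases le_total x y with h | h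
    · rw [Set.uIoo_of_le h]; exact ⟨h1, h2⟩
    · exact absurd (h1.trans h2) (not_lt.2 h)
  intro m hm
  exact uIoo_sub_J mp (hx m hm) (hy m hm)
    (between_iterate mp (fun m' hm' => hx m' hm') (fun m' hm' => hy m' hm') hzu m hm)

lemma cyl_nonempty {w : ℕ → mp.ι} (hw : Adm f mp w) (n : ℕ) : (cyl mp w n).Nonempty := by
  induction n generalizing w with
  | zero =>
      obtain ⟨x, hx⟩ := J_nonempty mp (w 0)
      exact ⟨x, fun m hm => by interval_cases m; exact hx⟩
  | succ n ih =>
      have hw' : Adm f mp (fun k => w (k+1)) := fun k => hw (k+1)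
      obtain ⟨y, hy⟩ := ih hw'
      have hy1 : y ∈ J mp (w 1) := hy 0 (Nat.zero_le n)
      obtain ⟨x, hxJ, hxy⟩ := hw 0 hy1
      refine ⟨x, fun m hm => ?_⟩
      cases m with
      | zero => exact hxJ
      | succ k =>
          rw [Function.iterate_succ_apply, hxy]
          exact hy k (Nat.succ_le_succ_iff.1 hm)

/-- the intersection of the closures of the cylinders -/
def Kset (w : ℕ → mp.ι) : Set ℝ := ⋂ n, closure (cyl mp w n)

lemma closure_cyl_sub_I (w : ℕ → mp.ι) (n : ℕ) :
    closure (cyl mp w n) ⊆ Set.Icc 0 1 := by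
  have h := closure_mono (cyl_sub_I mp w n)
  rwa [closure_Icc] at h

lemma closure_cyl_compact (w : ℕ → mp.ι) (n : ℕ) : IsCompact (closure (cyl mp w n)) :=
  isCompact_Icc.of_isClosed_subset isClosed_closure (closure_cyl_sub_I mp w n)

lemma Kset_nonempty {w : ℕ → mp.ι} (hw : Adm f mp w) : (Kset mp w).Nonempty := by
  show (⋂ n : ℕ, closure (cyl mp w n)).Nonempty
  exact IsCompact.nonempty_iInter_of_sequence_nonempty_isCompact_isClosed _
    (fun n => closure_mono (cyl_anti mp w (Nat.le_succ n)))
    (fun n => (cyl_nonempty mp hw n).closure)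
    (closure_cyl_compact mp w 0)
    (fun n => isClosed_closure)

lemma Kset_sub_I (w : ℕ → mp.ι) : Kset mp w ⊆ Set.Icc 0 1 := fun x hx => by
  have h0 := Set.mem_iInter.1 hx 0
  have h1 := closure_mono (cyl_sub_I mp w 0) h0
  rwa [closure_Icc] at h1

lemma Kset_ordConnected (w : ℕ → mp.ι) : Set.OrdConnected (Kset mp w) := by
  refine Set.ordConnected_iInter fun n => ?_
  exact IsPreconnected.ordConnected ((cyl_ordConnected mp w n).isPreconnected).closure

lemma G_not_mem_C {z : ℝ} (hz : z ∈ G f mp) : z ∉ mp.C := fun h => hz.2 (C_sub_Dset mp h)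

lemma mem_J_of_closure_cyl {v : ℕ → mp.ι} {u : ℝ} (hu : u ∈ closure (cyl mp v 0))
    (huC : u ∉ mp.C) : u ∈ J mp (v 0) := by
  have := closure_mono (cyl_sub_J mp v 0) hu
  rcases closure_J_sub mp (v 0) this with h | h
  · exact h
  · exact absurd h huC

/-- realization: a good point in the intersection of closed cylinders follows the itinerary. -/
lemma K_realizes {w : ℕ → mp.ι} {z : ℝ} (hz : z ∈ Kset mp w) (hzG : z ∈ G f mp) :
    ∀ k, f^[k] z ∈ J mp (w k) := by
  have main : ∀ k, ∀ n, f^[k] z ∈ closure (cyl mp (fun m => w (m + k)) n) := by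
    intro k
    induction k with
    | zero =>
        intro n
        simpa using Set.mem_iInter.1 hz n
    | succ k ih =>
        intro n
        have hzk : f^[k] z ∈ J mp (w k) := by
          have h0 := mem_J_of_closure_cyl mp (ih 0) (G_not_mem_C mp (G_iterate mp hzG k))
          simpa using h0
        have hcont : ContinuousWithinAt f (cyl mp (fun m => w (m + k)) (n+1)) (f^[k] z) := by
          have h1 : ContinuousWithinAt f (J mp (w k)) (f^[k] z) :=
            (mp.cont (w k)) _ hzk
          refine h1.mono ?_
          intro u hu
          have := hu 0 (Nat.zero_le (n+1))
          simpa using this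
        have himg := hcont.mem_closure_image (ih (n+1))
        rw [Function.iterate_succ_apply']
        refine closure_mono ?_ himg
        intro u ⟨p, hp, hpu⟩
        intro m hm
        rw [← hpu, ← Function.iterate_succ_apply]
        show f^[m+1] p ∈ J mp (w (m + (k+1)))
        have he : m + (k + 1) = m + 1 + k := by omega
        rw [he]
        exact hp (m+1) (Nat.succ_le_succ hm)
  intro k
  have h0 := mem_J_of_closure_cyl mp (main k 0) (G_not_mem_C mp (G_iterate mp hzG k))
  simpa using h0

lemma K_itin {w : ℕ → mp.ι} {z : ℝ} (hz : z ∈ Kset mp w) (hzG : z ∈ G f mp) :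
    itin mp z = w :=
  funext fun k => itin_eq mp (K_realizes mp hz hzG k)

lemma mem_cyl_of_itin {x : ℝ} (hx : x ∈ G f mp) (n : ℕ) : x ∈ cyl mp (itin mp x) n :=
  fun m _ => itin_spec mp hx m

lemma mem_K_of_itin {x : ℝ} (hx : x ∈ G f mp) : x ∈ Kset mp (itin mp x) :=
  Set.mem_iInter.2 fun n => subset_closure (mem_cyl_of_itin mp hx n)

/-- the canonical point of an admissible itinerary -/
noncomputable def xval (ω : {w : ℕ → mp.ι // Adm f mp w}) : ℝ :=
  (Kset_nonempty mp ω.2).choose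

lemma xval_mem (ω : {w : ℕ → mp.ι // Adm f mp w}) : xval mp ω ∈ Kset mp ω.1 :=
  (Kset_nonempty mp ω.2).choose_spec

lemma xval_closure (ω : {w : ℕ → mp.ι // Adm f mp w}) (n : ℕ) :
    xval mp ω ∈ closure (cyl mp ω.1 n) := Set.mem_iInter.1 (xval_mem mp ω) n

/-- the set of false itineraries -/
def NN (f : ℝ → ℝ) (mp : CountMarkov f) : Set {w : ℕ → mp.ι // Adm f mp w} :=
  {ω | ¬ ∃ x ∈ G f mp, itin mp x = ω.1}

lemma xval_mem_D_of_NN {ω : {w : ℕ → mp.ι // Adm f mp w}} (hω : ω ∈ NN f mp) :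
    xval mp ω ∈ Dset f mp := by
  by_contra h
  have hG : xval mp ω ∈ G f mp := ⟨Kset_sub_I mp ω.1 (xval_mem mp ω), h⟩
  exact hω ⟨xval mp ω, hG, K_itin mp (xval_mem mp ω) hG⟩

lemma ordConn_side {S : Set ℝ} (hS : S.OrdConnected) {x : ℝ} (hx : x ∉ S) :
    (∀ p ∈ S, p < x) ∨ (∀ p ∈ S, x < p) := by
  by_contra h
  push_neg at h
  obtain ⟨⟨p, hp, hpx⟩, ⟨q, hq, hqx⟩⟩ := h
  exact hx (hS.out hq hp ⟨hqx, hpx⟩)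

lemma side_overlap_lt {S T : Set ℝ} {x : ℝ} (hS : S.OrdConnected) (hSne : S.Nonempty)
    (hSx : ∀ p ∈ S, p < x) (hTx : ∀ p ∈ T, p < x)
    (hxS : x ∈ closure S) (hxT : x ∈ closure T) : (S ∩ T).Nonempty := by
  obtain ⟨p, hp⟩ := hSne
  obtain ⟨q, hq, hqd⟩ := Metric.mem_closure_iff.1 hxT (x - p) (by linarith [hSx p hp])
  have hqx : q < x := hTx q hq
  have hqp : p < q := by
    rw [Real.dist_eq, abs_of_pos (by linarith)] at hqd
    linarith
  obtain ⟨r, hr, hrd⟩ := Metric.mem_closure_iff.1 hxS (x - q) (by linarith)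
  have hrx : r < x := hSx r hr
  have hqr : q < r := by
    rw [Real.dist_eq, abs_of_pos (by linarith)] at hrd
    linarith
  exact ⟨q, hS.out hp hr ⟨hqp.le, hqr.le⟩, hq⟩

lemma side_overlap_gt {S T : Set ℝ} {x : ℝ} (hS : S.OrdConnected) (hSne : S.Nonempty)
    (hSx : ∀ p ∈ S, x < p) (hTx : ∀ p ∈ T, x < p)
    (hxS : x ∈ closure S) (hxT : x ∈ closure T) : (S ∩ T).Nonempty := by
  obtain ⟨p, hp⟩ := hSne
  obtain ⟨q, hq, hqd⟩ := Metric.mem_closure_iff.1 hxT (p - x) (by linarith [hSx p hp])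
  have hqx : x < q := hTx q hq
  have hqp : q < p := by
    rw [Real.dist_eq, abs_of_neg (by linarith)] at hqd
    linarith
  obtain ⟨r, hr, hrd⟩ := Metric.mem_closure_iff.1 hxS (q - x) (by linarith)
  have hrx : x < r := hSx r hr
  have hqr : r < q := by
    rw [Real.dist_eq, abs_of_neg (by linarith)] at hrd
    linarith
  exact ⟨q, hS.out hr hp ⟨hqr.le, hqp.le⟩, hq⟩

/-- classification families for counting false itineraries -/
def Finf (d : ℝ) : Set {w : ℕ → mp.ι // Adm f mp w} :=
  {ω | xval mp ω = d ∧ ∀ n, d ∈ cyl mp ω.1 n}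

def Flt (d : ℝ) (m : ℕ) : Set {w : ℕ → mp.ι // Adm f mp w} :=
  {ω | xval mp ω = d ∧ (∀ k < m, d ∈ cyl mp ω.1 k) ∧ ∀ p ∈ cyl mp ω.1 m, p < d}

def Fgt (d : ℝ) (m : ℕ) : Set {w : ℕ → mp.ι // Adm f mp w} :=
  {ω | xval mp ω = d ∧ (∀ k < m, d ∈ cyl mp ω.1 k) ∧ ∀ p ∈ cyl mp ω.1 m, d < p}

lemma symb_eq_of_common {ω ω' : {w : ℕ → mp.ι // Adm f mp w}} {n : ℕ}
    (h : (cyl mp ω.1 n ∩ cyl mp ω'.1 n).Nonempty) : ω.1 n = ω'.1 n := by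
  obtain ⟨u, hu, hu'⟩ := h
  exact J_eq_of_mem mp (hu n le_rfl) (hu' n le_rfl)

lemma Finf_subsingleton (d : ℝ) : (Finf mp d).Subsingleton := by
  rintro ω ⟨hx, hall⟩ ω' ⟨hx', hall'⟩
  apply Subtype.ext; funext n
  exact symb_eq_of_common mp ⟨d, hall n, hall' n⟩

lemma Flt_subsingleton (d : ℝ) (m : ℕ) : (Flt mp d m).Subsingleton := by
  rintro ω ⟨hx, hbel, hside⟩ ω' ⟨hx', hbel', hside'⟩
  apply Subtype.ext; funext n
  rcases Nat.lt_or_ge n m with hn | hn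
  · exact symb_eq_of_common mp ⟨d, hbel n hn, hbel' n hn⟩
  · refine symb_eq_of_common mp ?_
    refine side_overlap_lt (cyl_ordConnected mp ω.1 n) (cyl_nonempty mp ω.2 n)
      (fun p hp => hside p (cyl_anti mp ω.1 hn hp))
      (fun p hp => hside' p (cyl_anti mp ω'.1 hn hp)) ?_ ?_
    · rw [← hx]; exact xval_closure mp ω n
    · rw [← hx']; exact xval_closure mp ω' n

lemma Fgt_subsingleton (d : ℝ) (m : ℕ) : (Fgt mp d m).Subsingleton := by
  rintro ω ⟨hx, hbel, hside⟩ ω' ⟨hx', hbel', hside'⟩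
  apply Subtype.ext; funext n
  rcases Nat.lt_or_ge n m with hn | hn
  · exact symb_eq_of_common mp ⟨d, hbel n hn, hbel' n hn⟩
  · refine symb_eq_of_common mp ?_
    refine side_overlap_gt (cyl_ordConnected mp ω.1 n) (cyl_nonempty mp ω.2 n)
      (fun p hp => hside p (cyl_anti mp ω.1 hn hp))
      (fun p hp => hside' p (cyl_anti mp ω'.1 hn hp)) ?_ ?_
    · rw [← hx]; exact xval_closure mp ω n
    · rw [← hx']; exact xval_closure mp ω' n

lemma mem_classification (ω : {w : ℕ → mp.ι // Adm f mp w}) :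
    ω ∈ Finf mp (xval mp ω) ∨
      ∃ m, ω ∈ Flt mp (xval mp ω) m ∨ ω ∈ Fgt mp (xval mp ω) m := by
  classical
  set d := xval mp ω with hd
  by_cases hall : ∀ n, d ∈ cyl mp ω.1 n
  · exact Or.inl ⟨rfl, hall⟩
  · push_neg at hall
    have hex : ∃ n, d ∉ cyl mp ω.1 n := hall
    set m := Nat.find hex with hm
    have hbel : ∀ k < m, d ∈ cyl mp ω.1 k := fun k hk => not_not.1 (Nat.find_min hex hk)
    have hnot : d ∉ cyl mp ω.1 m := Nat.find_spec hex
    rcases ordConn_side (cyl_ordConnected mp ω.1 m) hnot with hs | hs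
    · exact Or.inr ⟨m, Or.inl ⟨rfl, hbel, hs⟩⟩
    · exact Or.inr ⟨m, Or.inr ⟨rfl, hbel, hs⟩⟩

lemma NN_countable : (NN f mp).Countable := by
  have hsub : NN f mp ⊆
      (⋃ d ∈ Dset f mp, Finf mp d) ∪
        ⋃ d ∈ Dset f mp, ⋃ m : ℕ, Flt mp d m ∪ Fgt mp d m := by
    intro ω hω
    have hd : xval mp ω ∈ Dset f mp := xval_mem_D_of_NN mp hω
    rcases mem_classification mp ω with h | ⟨m, h | h⟩
    · exact Or.inl (Set.mem_biUnion hd h)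
    · exact Or.inr (Set.mem_biUnion hd (Set.mem_iUnion.2 ⟨m, Or.inl h⟩))
    · exact Or.inr (Set.mem_biUnion hd (Set.mem_iUnion.2 ⟨m, Or.inr h⟩))
  refine Set.Countable.mono hsub (Set.Countable.union ?_ ?_)
  · exact Set.Countable.biUnion (Dset_countable mp)
      (fun d _ => (Finf_subsingleton mp d).countable)
  · refine Set.Countable.biUnion (Dset_countable mp) (fun d _ => ?_)
    exact Set.countable_iUnion (fun m => ((Flt_subsingleton mp d m).countable).union
      ((Fgt_subsingleton mp d m).countable))

lemma realized_shift {ω : {w : ℕ → mp.ι // Adm f mp w}} :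
    (∃ x ∈ G f mp, itin mp x = ω.1) ↔
      (∃ y ∈ G f mp, itin mp y = fun k => ω.1 (k + 1)) := by
  constructor
  · rintro ⟨x, hx, hix⟩
    refine ⟨f x, G_mapsTo mp hx, ?_⟩
    funext k
    rw [itin_shift mp hx k, hix]
  · rintro ⟨y, hy, hiy⟩
    have hy1 : y ∈ J mp (ω.1 1) := by
      have h0 := itin_spec mp hy 0
      rw [hiy] at h0
      simpa using h0
    obtain ⟨x, hxJ, hxy⟩ := ω.2 0 hy1
    have hxI : x ∈ Set.Icc (0:ℝ) 1 := mp.sub (ω.1 0) hxJ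
    have hxG : x ∈ G f mp := by
      refine ⟨hxI, fun hxD => ?_⟩
      obtain ⟨n, hn⟩ := Set.mem_iUnion.1 hxD.1
      cases n with
      | zero =>
          exact (mp.disjC (ω.1 0)).ne_of_mem hxJ hn rfl
      | succ m =>
          refine hy.2 ⟨Set.mem_iUnion.2 ⟨m, ?_⟩, hy.1⟩
          rw [Set.mem_preimage] at hn ⊢
          rw [Function.iterate_succ_apply, hxy] at hn
          exact hn
    refine ⟨x, hxG, ?_⟩
    funext k
    cases k with
    | zero => exact itin_eq mp (by simpa [J] using hxJ)
    | succ k =>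
        have := itin_shift mp hxG k
        rw [hxy, hiy] at this
        exact this.symm

lemma NN_invariant : mShift f mp ⁻¹' NN f mp = NN f mp := by
  ext ω
  show (¬ ∃ x ∈ G f mp, itin mp x = (mShift f mp ω).1) ↔ _
  have : (mShift f mp ω).1 = fun k => ω.1 (k + 1) := rfl
  rw [this]
  exact not_congr (realized_shift mp).symm

lemma Kset_subsingleton (hmix : MixingOn f) (w : ℕ → mp.ι) :
    (Kset mp w).Subsingleton := by
  intro p hp q hq
  by_contra hne
  rcases lt_or_gt_of_ne hne with hlt | hlt
  case _ =>
    have hIcc : Set.Icc p q ⊆ Kset mp w := fun z hz => (Kset_ordConnected mp w).out hp hq hz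
    have hunc : ¬ (Set.Ioo p q \ Dset f mp).Countable := by
      intro hc
      refine uncountable_Ioo hlt ?_
      have : Set.Ioo p q ⊆ (Set.Ioo p q \ Dset f mp) ∪ Dset f mp := by
        intro z hz
        by_cases h : z ∈ Dset f mp
        · exact Or.inr h
        · exact Or.inl ⟨hz, h⟩
      exact (hc.union (Dset_countable mp)).mono this
    have hnt : (Set.Ioo p q \ Dset f mp).Nontrivial := by
      rw [← Set.not_subsingleton_iff]
      exact fun hs => hunc hs.countable
    obtain ⟨u, ⟨huI, huD⟩, v, ⟨hvI, hvD⟩, huv⟩ := hnt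
    have huK : u ∈ Kset mp w := hIcc ⟨huI.1.le, huI.2.le⟩
    have hvK : v ∈ Kset mp w := hIcc ⟨hvI.1.le, hvI.2.le⟩
    have huG : u ∈ G f mp := ⟨Kset_sub_I mp w huK, huD⟩
    have hvG : v ∈ G f mp := ⟨Kset_sub_I mp w hvK, hvD⟩
    have h1 : itin mp u = w := K_itin mp huK huG
    have h2 : itin mp v = w := K_itin mp hvK hvG
    exact huv (itin_injOn hmix huG hvG (h1.trans h2.symm))
  case _ =>
    have hIcc : Set.Icc q p ⊆ Kset mp w := fun z hz => (Kset_ordConnected mp w).out hq hp hz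
    have hunc : ¬ (Set.Ioo q p \ Dset f mp).Countable := by
      intro hc
      refine uncountable_Ioo hlt ?_
      have : Set.Ioo q p ⊆ (Set.Ioo q p \ Dset f mp) ∪ Dset f mp := by
        intro z hz
        by_cases h : z ∈ Dset f mp
        · exact Or.inr h
        · exact Or.inl ⟨hz, h⟩
      exact (hc.union (Dset_countable mp)).mono this
    have hnt : (Set.Ioo q p \ Dset f mp).Nontrivial := by
      rw [← Set.not_subsingleton_iff]
      exact fun hs => hunc hs.countable
    obtain ⟨u, ⟨huI, huD⟩, v, ⟨hvI, hvD⟩, huv⟩ := hnt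
    have huK : u ∈ Kset mp w := hIcc ⟨huI.1.le, huI.2.le⟩
    have hvK : v ∈ Kset mp w := hIcc ⟨hvI.1.le, hvI.2.le⟩
    have huG : u ∈ G f mp := ⟨Kset_sub_I mp w huK, huD⟩
    have hvG : v ∈ G f mp := ⟨Kset_sub_I mp w hvK, hvD⟩
    have h1 : itin mp u = w := K_itin mp huK huG
    have h2 : itin mp v = w := K_itin mp hvK hvG
    exact huv (itin_injOn hmix huG hvG (h1.trans h2.symm))

lemma xval_eq_of_realizer (hmix : MixingOn f) {ω : {w : ℕ → mp.ι // Adm f mp w}} {x : ℝ}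
    (hx : x ∈ G f mp) (hit : itin mp x = ω.1) : xval mp ω = x := by
  have hxK : x ∈ Kset mp ω.1 := hit ▸ mem_K_of_itin mp hx
  exact Kset_subsingleton mp hmix ω.1 (xval_mem mp ω) hxK

lemma bijOn_xval (hmix : MixingOn f) :
    Set.BijOn (xval mp) (NN f mp)ᶜ (G f mp) := by
  refine ⟨?_, ?_, ?_⟩
  · intro ω hω
    obtain ⟨x, hx, hit⟩ := not_not.1 hω
    rw [xval_eq_of_realizer mp hmix hx hit]
    exact hx
  · intro ω hω ω' hω' he
    obtain ⟨x, hx, hit⟩ := not_not.1 hω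
    obtain ⟨x', hx', hit'⟩ := not_not.1 hω'
    rw [xval_eq_of_realizer mp hmix hx hit, xval_eq_of_realizer mp hmix hx' hit'] at he
    subst he
    exact Subtype.ext (hit ▸ hit' ▸ rfl)
  · intro x hx
    refine ⟨⟨itin mp x, itin_adm mp hx⟩, not_not.2 ⟨x, hx, rfl⟩, ?_⟩
    exact xval_eq_of_realizer mp hmix hx rfl

lemma xval_conj (hmix : MixingOn f) {ω : {w : ℕ → mp.ι // Adm f mp w}}
    (hω : ω ∉ NN f mp) : xval mp (mShift f mp ω) = f (xval mp ω) := by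
  obtain ⟨x, hx, hit⟩ := not_not.1 hω
  rw [xval_eq_of_realizer mp hmix hx hit]
  refine xval_eq_of_realizer mp hmix (G_mapsTo mp hx) ?_
  funext k
  show itin mp (f x) k = ω.1 (k+1)
  rw [itin_shift mp hx k, hit]

lemma G_measurable : MeasurableSet (G f mp) :=
  measurableSet_Icc.diff (Dset_countable mp).measurableSet

lemma cyl_measurable (w : ℕ → mp.ι) (n : ℕ) : MeasurableSet (cyl mp w n) :=
  (cyl_ordConnected mp w n).measurableSet

/-- extension of a finite word -/
def extF {k : ℕ} (w : Fin (k+1) → mp.ι) : ℕ → mp.ι :=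
  fun m => w ⟨min m k, Nat.lt_succ_of_le (min_le_right m k)⟩

lemma Aki_eq (k : ℕ) (i : mp.ι) :
    G f mp ∩ {x | itin mp x k = i} =
      G f mp ∩ ⋃ (w : Fin (k+1) → mp.ι) (_ : w (Fin.last k) = i), cyl mp (extF mp w) k := by
  ext x
  simp only [Set.mem_inter_iff, Set.mem_iUnion, Set.mem_setOf_eq]
  refine and_congr_right fun hG => ⟨fun hit => ?_, fun ⟨w, hw, hc⟩ => ?_⟩
  · refine ⟨fun j => itin mp x j.val, by rw [← hit]; rfl, fun m hm => ?_⟩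
    have : extF mp (fun j : Fin (k+1) => itin mp x j.val) m = itin mp x m := by
      simp only [extF, min_eq_left hm]
    rw [this]
    exact itin_spec mp hG m
  · have h1 : f^[k] x ∈ J mp (extF mp w k) := hc k le_rfl
    have h2 : extF mp w k = i := by
      simp only [extF]
      rw [← hw]
      congr 1
      exact Fin.ext (by simp)
    rw [h2] at h1
    exact itin_eq mp h1

lemma Aki_measurable (k : ℕ) (i : mp.ι) :
    MeasurableSet (G f mp ∩ {x | itin mp x k = i}) := by
  have := mp.countable
  rw [Aki_eq]
  refine (G_measurable mp).inter (MeasurableSet.iUnion fun w => ?_)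
  exact MeasurableSet.iUnion fun _ => cyl_measurable mp _ k

/-- the product measurable structure with discrete factors -/
def piT (f : ℝ → ℝ) (mp : CountMarkov f) : MeasurableSpace (ℕ → mp.ι) :=
  @MeasurableSpace.pi _ _ (fun _ => ⊤)

lemma itin_pre_meas (B : Set (ℕ → mp.ι)) (hB : @MeasurableSet _ (piT f mp) B) :
    MeasurableSet (G f mp ∩ itin mp ⁻¹' B) := by
  have hcnt := mp.countable
  let 𝓜 : MeasurableSpace (ℕ → mp.ι) :=
    { MeasurableSet' := fun B' => MeasurableSet (G f mp ∩ itin mp ⁻¹' B')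
      measurableSet_empty := by simp
      measurableSet_compl := by
        intro B' hB'
        have he : G f mp ∩ itin mp ⁻¹' B'ᶜ = G f mp \ (G f mp ∩ itin mp ⁻¹' B') := by
          ext x
          simp only [Set.mem_inter_iff, Set.mem_preimage, Set.mem_compl_iff, Set.mem_diff]
          tauto
        rw [he]
        exact (G_measurable mp).diff hB'
      measurableSet_iUnion := by
        intro s hs
        have he : G f mp ∩ itin mp ⁻¹' (⋃ n, s n) = ⋃ n, G f mp ∩ itin mp ⁻¹' (s n) := by
          ext x
          simp only [Set.mem_inter_iff, Set.mem_preimage, Set.mem_iUnion]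
          tauto
        rw [he]
        exact MeasurableSet.iUnion hs }
  have hle : piT f mp ≤ 𝓜 := by
    have hpi : piT f mp =
        ⨆ k : ℕ, MeasurableSpace.comap (fun b : ℕ → mp.ι => b k) (⊤ : MeasurableSpace mp.ι) :=
      rfl
    rw [hpi]
    refine iSup_le fun k => ?_
    intro B' hB'
    obtain ⟨S, -, rfl⟩ := hB'
    show MeasurableSet (G f mp ∩ itin mp ⁻¹' ((fun w => w k) ⁻¹' S))
    have he : G f mp ∩ itin mp ⁻¹' ((fun w => w k) ⁻¹' S) =
        ⋃ (i : mp.ι) (_ : i ∈ S), G f mp ∩ {x | itin mp x k = i} := by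
      ext x
      simp only [Set.mem_inter_iff, Set.mem_preimage, Set.mem_iUnion, Set.mem_setOf_eq]
      constructor
      · rintro ⟨hG, hS⟩
        exact ⟨itin mp x k, hS, hG, rfl⟩
      · rintro ⟨i, hiS, hG, hik⟩
        exact ⟨hG, hik ▸ hiS⟩
    rw [he]
    exact MeasurableSet.iUnion fun i => MeasurableSet.iUnion fun _ => Aki_measurable mp k i
  exact hle B hB

lemma image_xval_eq (hmix : MixingOn f) (B : Set (ℕ → mp.ι)) :
    xval mp '' ((Subtype.val ⁻¹' B) ∩ (NN f mp)ᶜ) = G f mp ∩ itin mp ⁻¹' B := by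
  ext y
  constructor
  · rintro ⟨ω, ⟨hA, hNN⟩, rfl⟩
    obtain ⟨x, hx, hit⟩ := not_not.1 hNN
    have hxy : xval mp ω = x := xval_eq_of_realizer mp hmix hx hit
    rw [hxy]
    refine ⟨hx, ?_⟩
    show itin mp x ∈ B
    rw [hit]
    exact hA
  · rintro ⟨hG, hB⟩
    refine ⟨⟨itin mp y, itin_adm mp hG⟩, ⟨hB, not_not.2 ⟨y, hG, rfl⟩⟩, ?_⟩
    exact xval_eq_of_realizer mp hmix hG rfl

lemma image_meas (hmix : MixingOn f) (A : Set {w : ℕ → mp.ι // Adm f mp w})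
    (hA : MeasurableSet A) : MeasurableSet (xval mp '' (A ∩ (NN f mp)ᶜ)) := by
  obtain ⟨B, hB, rfl⟩ := hA
  rw [image_xval_eq mp hmix B]
  exact itin_pre_meas mp B hB

lemma coord_meas (k : ℕ) (i : mp.ι) :
    MeasurableSet {ω : {w : ℕ → mp.ι // Adm f mp w} | ω.1 k = i} := by
  refine ⟨(fun b : ℕ → mp.ι => b k) ⁻¹' {i}, ?_, rfl⟩
  have hle : MeasurableSpace.comap (fun b : ℕ → mp.ι => b k) (⊤ : MeasurableSpace mp.ι) ≤
      piT f mp := le_iSup (fun k : ℕ =>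
        MeasurableSpace.comap (fun b : ℕ → mp.ι => b k) (⊤ : MeasurableSpace mp.ι)) k
  exact hle _ ⟨{i}, trivial, rfl⟩

lemma sing_meas (ω₀ : {w : ℕ → mp.ι // Adm f mp w}) : MeasurableSet {ω₀} := by
  have he : {ω₀} = ⋂ k : ℕ, {ω : {w : ℕ → mp.ι // Adm f mp w} | ω.1 k = ω₀.1 k} := by
    ext ω
    simp only [Set.mem_singleton_iff, Set.mem_iInter, Set.mem_setOf_eq]
    constructor
    · rintro rfl; exact fun k => rfl
    · intro h; exact Subtype.ext (funext h)
  rw [he]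
  exact MeasurableSet.iInter fun k => coord_meas mp k (ω₀.1 k)

lemma NN_meas : MeasurableSet (NN f mp) := by
  have he : NN f mp = ⋃ ω ∈ NN f mp, {ω} := by simp
  rw [he]
  exact MeasurableSet.biUnion (NN_countable mp) fun ω _ => sing_meas mp ω

lemma cyl_congr {w w' : ℕ → mp.ι} {n : ℕ} (h : ∀ m ≤ n, w m = w' m) :
    cyl mp w n = cyl mp w' n := by
  ext x
  constructor
  · intro hx m hm; rw [← h m hm]; exact hx m hm
  · intro hx m hm; rw [h m hm]; exact hx m hm

/-- the event that the `n`-cylinder closure lies below `q` -/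
def CqSet (q : ℝ) (n : ℕ) : Set {w : ℕ → mp.ι // Adm f mp w} :=
  {ω | closure (cyl mp ω.1 n) ⊆ Set.Iio q}

lemma CqSet_meas (q : ℝ) (n : ℕ) : MeasurableSet (CqSet mp q n) := by
  have hcnt := mp.countable
  have he : CqSet mp q n = ⋃ (w : Fin (n+1) → mp.ι)
      (_ : closure (cyl mp (extF mp w) n) ⊆ Set.Iio q),
      ⋂ m : Fin (n+1), {ω : {w : ℕ → mp.ι // Adm f mp w} | ω.1 m.val = w m} := by
    ext ω
    simp only [CqSet, Set.mem_setOf_eq, Set.mem_iUnion, Set.mem_iInter]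
    constructor
    · intro h
      refine ⟨fun j => ω.1 j.val, ?_, fun m => rfl⟩
      have : cyl mp (extF mp (fun j : Fin (n+1) => ω.1 j.val)) n = cyl mp ω.1 n := by
        refine cyl_congr mp fun m hm => ?_
        simp only [extF, min_eq_left hm]
      rw [this]
      exact h
    · rintro ⟨w, hw, hmem⟩
      have : cyl mp ω.1 n = cyl mp (extF mp w) n := by
        refine cyl_congr mp fun m hm => ?_
        have h1 := hmem ⟨m, Nat.lt_succ_of_le hm⟩
        simp only [extF, min_eq_left hm]
        exact h1
      rw [this]
      exact hw
  rw [he]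
  refine MeasurableSet.iUnion fun w => MeasurableSet.iUnion fun _ => ?_
  exact MeasurableSet.iInter fun m => coord_meas mp m.val (w m)

lemma pre_Iio (hmix : MixingOn f) (q : ℝ) :
    (NN f mp)ᶜ ∩ xval mp ⁻¹' (Set.Iio q) = (NN f mp)ᶜ ∩ ⋃ n, CqSet mp q n := by
  ext ω
  simp only [Set.mem_inter_iff, Set.mem_preimage, Set.mem_iUnion, Set.mem_compl_iff,
    Set.mem_Iio]
  refine and_congr_right fun hNN => ⟨fun hq => ?_, fun ⟨n, hn⟩ => hn (xval_closure mp ω n)⟩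
  by_contra hc
  push_neg at hc
  have hne : ∀ n : ℕ, (closure (cyl mp ω.1 n) ∩ Set.Ici q).Nonempty := by
    intro n
    obtain ⟨y, hy, hy2⟩ := Set.not_subset.1 (hc n)
    exact ⟨y, hy, by simpa using hy2⟩
  have hnested : ∀ n : ℕ, closure (cyl mp ω.1 (n+1)) ∩ Set.Ici q ⊆
      closure (cyl mp ω.1 n) ∩ Set.Ici q :=
    fun n => Set.inter_subset_inter_left _ (closure_mono (cyl_anti mp ω.1 (Nat.le_succ n)))
  obtain ⟨z, hz⟩ := IsCompact.nonempty_iInter_of_sequence_nonempty_isCompact_isClosed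
    (fun n => closure (cyl mp ω.1 n) ∩ Set.Ici q) hnested hne
    ((closure_cyl_compact mp ω.1 0).inter_right isClosed_Ici)
    (fun n => isClosed_closure.inter isClosed_Ici)
  have hzK : z ∈ Kset mp ω.1 :=
    Set.mem_iInter.2 fun n => (Set.mem_iInter.1 hz n).1
  have hzq : q ≤ z := (Set.mem_iInter.1 hz 0).2
  have : z = xval mp ω := Kset_subsingleton mp hmix ω.1 hzK (xval_mem mp ω)
  rw [this] at hzq
  exact absurd hq (not_lt.2 hzq)

lemma pre_meas (hmix : MixingOn f) (B : Set ℝ) (hB : MeasurableSet B) :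
    MeasurableSet ((NN f mp)ᶜ ∩ xval mp ⁻¹' B) := by
  let 𝓜 : MeasurableSpace ℝ :=
    { MeasurableSet' := fun B' => MeasurableSet ((NN f mp)ᶜ ∩ xval mp ⁻¹' B')
      measurableSet_empty := by simp
      measurableSet_compl := by
        intro B' hB'
        have he : (NN f mp)ᶜ ∩ xval mp ⁻¹' B'ᶜ =
            (NN f mp)ᶜ \ ((NN f mp)ᶜ ∩ xval mp ⁻¹' B') := by
          ext ω
          simp only [Set.mem_inter_iff, Set.mem_preimage, Set.mem_compl_iff, Set.mem_diff]
          tauto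
        rw [he]
        exact (NN_meas mp).compl.diff hB'
      measurableSet_iUnion := by
        intro s hs
        have he : (NN f mp)ᶜ ∩ xval mp ⁻¹' (⋃ n, s n) =
            ⋃ n, (NN f mp)ᶜ ∩ xval mp ⁻¹' (s n) := by
          ext ω
          simp only [Set.mem_inter_iff, Set.mem_preimage, Set.mem_iUnion]
          tauto
        rw [he]
        exact MeasurableSet.iUnion hs }
  have hle : (borel ℝ) ≤ 𝓜 := by
    rw [borel_eq_generateFrom_Iio]
    refine MeasurableSpace.generateFrom_le ?_
    rintro _ ⟨q, rfl⟩
    show MeasurableSet ((NN f mp)ᶜ ∩ xval mp ⁻¹' Set.Iio q)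
    rw [pre_Iio mp hmix q]
    exact (NN_meas mp).compl.inter (MeasurableSet.iUnion fun n => CqSet_meas mp q n)
  have hB' : (borel ℝ).MeasurableSet' B := by
    have heq : Real.measurableSpace = borel ℝ := rfl
    rw [← heq]
    exact hB
  exact hle B hB'

end MProof

/-- A countably Markov and mixing interval map `f` with transition matrix `M` is
isomorphic modulo countable invariant sets to the Markov shift `(Σ_M, σ)`: there are a
totally invariant countable set `N ⊆ Σ_M` (the false itineraries) and a map `ψ` such that,
with `D = ⋃ₙ f⁻ⁿ(C) ∩ [0,1]` the (countable, totally invariant) set of pre-partition points,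
`ψ` is a bimeasurable bijection from `Σ_M ∖ N` onto `[0,1] ∖ D` with `f ∘ ψ = ψ ∘ σ`. -/
theorem markov_shift_isomorphism
    (f : ℝ → ℝ) (mp : CountMarkov f) (hmix : MixingOn f) :
    ∃ (N : Set {w : ℕ → mp.ι // Adm f mp w}) (ψ : {w : ℕ → mp.ι // Adm f mp w} → ℝ),
      N.Countable ∧ mShift f mp ⁻¹' N = N ∧
      ((⋃ n : ℕ, f^[n] ⁻¹' mp.C) ∩ Set.Icc 0 1).Countable ∧
      f ⁻¹' ((⋃ n : ℕ, f^[n] ⁻¹' mp.C) ∩ Set.Icc 0 1) ∩ Set.Icc 0 1 =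
        (⋃ n : ℕ, f^[n] ⁻¹' mp.C) ∩ Set.Icc 0 1 ∧
      Set.BijOn ψ Nᶜ (Set.Icc 0 1 \ ((⋃ n : ℕ, f^[n] ⁻¹' mp.C) ∩ Set.Icc 0 1)) ∧
      (∀ ω ∉ N, ψ (mShift f mp ω) = f (ψ ω)) ∧
      (∀ B : Set ℝ, MeasurableSet B → MeasurableSet (Nᶜ ∩ ψ ⁻¹' B)) ∧
      (∀ A : Set {w : ℕ → mp.ι // Adm f mp w}, MeasurableSet A →
        MeasurableSet (ψ '' (A ∩ Nᶜ))) := by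
  
  refine ⟨MProof.NN f mp, MProof.xval mp, MProof.NN_countable mp, MProof.NN_invariant mp,
    MProof.Dset_countable mp, MProof.Dset_invariant mp, MProof.bijOn_xval mp hmix,
    fun ω hω => MProof.xval_conj mp hmix hω, fun B hB => MProof.pre_meas mp hmix B hB,
    fun A hA => MProof.image_meas mp hmix A hA⟩
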